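/- Let (Ω, F, P) be a probability space, (F_n) a filtration, and (V_n) a nonnegative adapted process satisfying E[V_{n+1} | F_n] ≤ V_n + ε_n, where (ε_n) are nonnegative F_n-measurable random variables with E[∑_{n} ε_n] < ∞. Then V_n converges almost surely to a finite random limit. -/

import Mathlib

open MeasureTheory Filter

theorem almost_supermartingale_convergence
    {Ω : Type*} {m0 : MeasurableSpace Ω} {μ : Measure Ω} [IsProbabilityMeasure μ]
    (ℱ : Filtration ℕ m0) (V ε : ℕ → Ω → ℝ)
    (hV_adapted : Adapted ℱ V)
    (hV_nonneg : ∀ n ω, 0 ≤ V n ω)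
    (hV_int : ∀ n, Integrable (V n) μ)
    (hε_meas : ∀ n, StronglyMeasurable[ℱ n] (ε n))
    (hε_nonneg : ∀ n ω, 0 ≤ ε n ω)
    (hε_int : ∀ n, Integrable (ε n) μ)
    (hε_sum : Summable fun n => ∫ ω, ε n ω ∂μ)
    (hsupermart : ∀ n, μ[V (n + 1) | ℱ n] ≤ᵐ[μ] V n + ε n) :
    ∀ᵐ ω ∂μ, ∃ l : ℝ, Tendsto (fun n => V n ω) atTop (nhds l) := by
  classical
  set s : ℕ → Ω → ℝ := fun n ω => ∑ k ∈ Finset.range n, ε k ω with hs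
  set f : ℕ → Ω → ℝ := fun n ω => s n ω - V n ω with hf
  have hs_meas : ∀ n, StronglyMeasurable[ℱ n] (s n) := by
    intro n
    apply Finset.stronglyMeasurable_fun_sum
    intro k hk
    exact (hε_meas k).mono (ℱ.mono (Finset.mem_range.mp hk).le)
  have hs_int : ∀ n, Integrable (s n) μ := fun n =>
    integrable_finset_sum _ fun k _ => hε_int k
  have hf_int : ∀ n, Integrable (f n) μ := fun n => (hs_int n).sub (hV_int n)
  have hf_adapted : Adapted ℱ f := fun n => ((hs_meas n).sub (hV_adapted n).stronglyMeasurable).measurable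
  -- submartingale property
  have hsub : Submartingale f ℱ μ := by
    refine submartingale_nat hf_adapted.stronglyAdapted hf_int fun n => ?_
    have h1 : μ[f (n + 1) | ℱ n] =ᵐ[μ] μ[s (n + 1) | ℱ n] - μ[V (n + 1) | ℱ n] :=
      condExp_sub (hs_int (n + 1)) (hV_int (n + 1)) _
    have h2 : μ[s (n + 1) | ℱ n] = s (n + 1) :=
      condExp_of_stronglyMeasurable (ℱ.le n)
        (by
          apply Finset.stronglyMeasurable_fun_sum
          intro k hk
          exact (hε_meas k).mono (ℱ.mono (Nat.lt_succ_iff.mp (Finset.mem_range.mp hk))))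
        (hs_int (n + 1))
    filter_upwards [h1, hsupermart n] with ω h1ω h2ω
    have : s (n + 1) ω = s n ω + ε n ω := by
      simp [hs, Finset.sum_range_succ]
    simp only [hf]
    rw [h1ω, h2, Pi.sub_apply, this]
    have := h2ω
    simp only [Pi.add_apply] at this
    linarith
  -- bound on E[V n]
  have hEV : ∀ n, ∫ ω, V n ω ∂μ ≤ ∫ ω, V 0 ω ∂μ + ∑ k ∈ Finset.range n, ∫ ω, ε k ω ∂μ := by
    intro n
    induction n with
    | zero => simp
    | succ n ih =>
      have h1 : ∫ ω, V (n + 1) ω ∂μ = ∫ ω, (μ[V (n + 1) | ℱ n]) ω ∂μ :=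
        (integral_condExp (ℱ.le n)).symm
      have h2 : ∫ ω, (μ[V (n + 1) | ℱ n]) ω ∂μ ≤ ∫ ω, (V n ω + ε n ω) ∂μ := by
        refine integral_mono_ae integrable_condExp ((hV_int n).add (hε_int n)) ?_
        filter_upwards [hsupermart n] with ω hω using hω
      rw [integral_add (hV_int n) (hε_int n)] at h2
      rw [Finset.sum_range_succ]
      linarith [h1 ▸ h2]
  set S : ℝ := ∑' n, ∫ ω, ε n ω ∂μ with hS
  have hSsum : ∀ n, ∑ k ∈ Finset.range n, ∫ ω, ε k ω ∂μ ≤ S :=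
    fun n => Summable.sum_le_tsum _ (fun k _ => integral_nonneg fun ω => hε_nonneg k ω) hε_sum
  -- L¹ bound
  set R : NNReal := (∫ ω, V 0 ω ∂μ + 2 * S).toNNReal with hR
  have hbdd : ∀ n, eLpNorm (f n) 1 μ ≤ R := by
    intro n
    have hnorm : ∫ ω, ‖f n ω‖ ∂μ ≤ ∫ ω, V 0 ω ∂μ + 2 * S := by
      have h1 : ∫ ω, ‖f n ω‖ ∂μ ≤ ∫ ω, (s n ω + V n ω) ∂μ := by
        refine integral_mono ((hf_int n).norm) ((hs_int n).add (hV_int n)) fun ω => ?_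
        have hsn : 0 ≤ s n ω := Finset.sum_nonneg fun k _ => hε_nonneg k ω
        simp only [hf, Real.norm_eq_abs]
        rw [abs_sub_le_iff]
        constructor <;> nlinarith [hV_nonneg n ω]
      rw [integral_add (hs_int n) (hV_int n)] at h1
      have h2 : ∫ ω, s n ω ∂μ = ∑ k ∈ Finset.range n, ∫ ω, ε k ω ∂μ := by
        simp only [hs]
        rw [integral_finset_sum _ fun k _ => hε_int k]
      have := hEV n
      have := hSsum n
      linarith
    have heq : eLpNorm (f n) 1 μ = ENNReal.ofReal (∫ ω, ‖f n ω‖ ∂μ) := by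
      rw [eLpNorm_one_eq_lintegral_enorm,
        ← ofReal_integral_norm_eq_lintegral_enorm (hf_int n)]
    rw [heq, hR]
    exact le_trans (ENNReal.ofReal_le_ofReal hnorm) (le_of_eq (ENNReal.ofReal.eq_def _))
  -- a.e. convergence of f
  have hfconv := hsub.ae_tendsto_limitProcess hbdd
  -- a.e. summability of ε
  have hεae : ∀ᵐ ω ∂μ, Summable fun n => ε n ω := by
    have hlin : ∫⁻ ω, ∑' n, ENNReal.ofReal (ε n ω) ∂μ < ⊤ := by
      rw [lintegral_tsum fun n => ((hε_int n).aemeasurable.ennreal_ofReal)]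
      have : ∀ n, ∫⁻ ω, ENNReal.ofReal (ε n ω) ∂μ = ENNReal.ofReal (∫ ω, ε n ω ∂μ) := by
        intro n
        rw [← ofReal_integral_eq_lintegral_ofReal (hε_int n)
          (Eventually.of_forall fun ω => hε_nonneg n ω)]
      simp_rw [this]
      calc ∑' n, ENNReal.ofReal (∫ ω, ε n ω ∂μ)
          = ENNReal.ofReal (∑' n, ∫ ω, ε n ω ∂μ) := by
            rw [ENNReal.ofReal_tsum_of_nonneg (fun n => integral_nonneg fun ω => hε_nonneg n ω)
              hε_sum]
        _ < ⊤ := ENNReal.ofReal_lt_top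
    filter_upwards [ae_lt_top' (AEMeasurable.ennreal_tsum fun n =>
      (hε_int n).aemeasurable.ennreal_ofReal) hlin.ne] with ω hω
    have hsum : ∑' n, ENNReal.ofReal (ε n ω) ≠ ⊤ := hω.ne
    have := ENNReal.summable_toReal hsum
    refine this.congr fun n => ?_
    rw [ENNReal.toReal_ofReal (hε_nonneg n ω)]
  filter_upwards [hfconv, hεae] with ω hfω hεω
  have hsω : Tendsto (fun n => s n ω) atTop (nhds (∑' n, ε n ω)) :=
    hεω.hasSum.tendsto_sum_nat
  refine ⟨(∑' n, ε n ω) - ℱ.limitProcess f μ ω, ?_⟩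
  have : ∀ n, V n ω = s n ω - f n ω := fun n => by simp [hf]
  simp_rw [this]
  exact hsω.sub hfω
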